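/- There exists a constant c > 0 such that for every sufficiently large integer n there is a finite simple graph G on n vertices with local boxicity lbox(G) ≥ c · n / log₂ n. -/

import Mathlib

open Classical

/-- A finite simple graph is an interval graph if each vertex can be assigned a
closed real interval so that distinct vertices are adjacent iff their intervals
intersect. -/
def IsIntervalGraph {V : Type} (I : SimpleGraph V) : Prop :=
  ∃ l r : V → ℝ, ∀ u v : V, u ≠ v →
    (I.Adj u v ↔ (Set.Icc (l u) (r u) ∩ Set.Icc (l v) (r v)).Nonempty)

/-- A vertex is universal if it is adjacent to every other vertex. -/
def IsUniversal {V : Type} (I : SimpleGraph V) (v : V) : Prop :=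
  ∀ u : V, u ≠ v → I.Adj v u

/-- `G` has a local box representation where every vertex is non-universal in at
most `t` of the interval graphs. -/
def LocalBoxRep {V : Type} (G : SimpleGraph V) (t : ℕ) : Prop :=
  ∃ (k : ℕ) (I : Fin k → SimpleGraph V),
    (∀ i, IsIntervalGraph (I i)) ∧
    (∀ u v : V, u ≠ v → (G.Adj u v ↔ ∀ i, (I i).Adj u v)) ∧
    (∀ v : V, {i : Fin k | ¬ IsUniversal (I i) v}.ncard ≤ t)

/-- Local boxicity of a graph. -/
noncomputable def lbox {V : Type} (G : SimpleGraph V) : ℕ :=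
  sInf {t : ℕ | LocalBoxRep G t}

/-- Iterated base-2 logarithm: the number of times `logb 2` must be applied
before the result becomes at most 1. -/
noncomputable def logStar (x : ℝ) : ℕ :=
  sInf {n : ℕ | (Real.logb 2)^[n] x ≤ 1}

/-- A graph is claw-free if it has no induced `K_{1,3}`. -/
def ClawFree {V : Type} (G : SimpleGraph V) : Prop :=
  ∀ v a b c : V, a ≠ b → a ≠ c → b ≠ c →
    ¬ (G.Adj v a ∧ G.Adj v b ∧ G.Adj v c ∧ ¬ G.Adj a b ∧ ¬ G.Adj a c ∧ ¬ G.Adj b c)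

/-- Comparability graph of a poset. -/
def compGraph (α : Type) [PartialOrder α] : SimpleGraph α where
  Adj x y := x ≠ y ∧ (x ≤ y ∨ y ≤ x)
  symm := by
    refine ⟨?_⟩
    intro x y h
    exact ⟨h.1.symm, h.2.symm⟩
  loopless := by
    refine ⟨?_⟩
    intro x h
    exact h.1 rfl

/-- A partial linear extension of a poset, given as a duplicate-free list
(ordered by position) which extends the partial order on its elements. -/
def IsPLE {α : Type} [PartialOrder α] [DecidableEq α] (L : List α) : Prop :=
  L.Nodup ∧ ∀ x ∈ L, ∀ y ∈ L, x ≤ y → L.idxOf x ≤ L.idxOf y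

/-- `x` appears below `y` in the list `L`. -/
def Below {α : Type} [DecidableEq α] (L : List α) (x y : α) : Prop :=
  x ∈ L ∧ y ∈ L ∧ L.idxOf x < L.idxOf y

/-- A local realizer of a poset: a family of ple's such that every strict
relation is witnessed, and every incomparable pair is reversed twice. -/
def IsLocalRealizer {α : Type} [PartialOrder α] [DecidableEq α] {k : ℕ}
    (L : Fin k → List α) : Prop :=
  (∀ i, IsPLE (L i)) ∧
  (∀ x y : α, x < y → ∃ i, Below (L i) x y) ∧
  (∀ x y : α, ¬ x ≤ y → ¬ y ≤ x →
    (∃ i, Below (L i) x y) ∧ (∃ i, Below (L i) y x))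

/-- Local dimension of a poset: the least `t` such that some local realizer has
every element in at most `t` ple's. -/
noncomputable def ldim (α : Type) [PartialOrder α] [DecidableEq α] : ℕ :=
  sInf {t : ℕ | ∃ (k : ℕ) (L : Fin k → List α), IsLocalRealizer L ∧
    ∀ x : α, {i : Fin k | x ∈ L i}.ncard ≤ t}

/-- Product dimension of a graph. -/
noncomputable def prodDim {V : Type} (G : SimpleGraph V) : ℕ :=
  sInf {k : ℕ | 0 < k ∧ ∃ f : V → Fin k → ℕ,
    ∀ u v : V, u ≠ v → (G.Adj u v ↔ ∀ i, f u i ≠ f v i)}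

/-- A poset has height at most 2: every chain has at most 2 elements. -/
def HeightAtMostTwo (α : Type) [Preorder α] : Prop :=
  ∀ x y z : α, x ≤ y → y ≤ z → x = y ∨ y = z

def Pred10 {t m s : ℕ} (f g : Fin t → Option (Fin m × Fin s × Fin s)) : Prop :=
  ∀ j j' d d', f j = some d → g j' = some d' → d.1 = d'.1 →
    (d.2.1 ≤ d.2.2 ∧ d'.2.1 ≤ d'.2.2 ∧ d.2.1 ≤ d'.2.2 ∧ d'.2.1 ≤ d.2.2)

lemma encode_exists10 {n t : ℕ} {G : SimpleGraph (Fin n)} (h : LocalBoxRep G t) :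
    ∃ e : Fin n → Fin t → Option (Fin (t*n) × Fin (2*n+1) × Fin (2*n+1)),
      ∀ u v : Fin n, u ≠ v → (G.Adj u v ↔ Pred10 (e u) (e v)) := by
  classical
  obtain ⟨k, I, hI, hadj, hnu⟩ := h
  choose l r hlr using hI
  set S : Fin n → Finset (Fin k) :=
    fun v => Finset.univ.filter (fun i => ¬ IsUniversal (I i) v) with hSdef
  have hScard : ∀ v, (S v).card ≤ t := by
    intro v
    have h0 := hnu v
    have e1 : {i : Fin k | ¬ IsUniversal (I i) v} = ↑(S v) := by
      ext i; simp [hSdef]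
    rwa [e1, Set.ncard_coe_finset] at h0
  set U : Finset (Fin k) := Finset.univ.biUnion S with hUdef
  have hUcard : U.card ≤ t * n := by
    calc U.card ≤ ∑ v, (S v).card := Finset.card_biUnion_le
    _ ≤ ∑ _v : Fin n, t := Finset.sum_le_sum (fun v _ => hScard v)
    _ = n * t := by simp [Finset.sum_const, Finset.card_univ, Nat.smul_one_eq_cast]
    _ = t * n := Nat.mul_comm n t
  obtain ⟨φ⟩ : Nonempty (↥U ↪ Fin (t*n)) := by
    apply Function.Embedding.nonempty_of_card_le
    simpa [Fintype.card_coe] using hUcard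
  have hψ : ∀ v, Nonempty (↥(S v) ↪ Fin t) := fun v => by
    apply Function.Embedding.nonempty_of_card_le
    simpa [Fintype.card_coe] using hScard v
  set ψ : ∀ v : Fin n, ↥(S v) ↪ Fin t := fun v => (hψ v).some with hψdef
  set A : Fin k → Finset ℝ :=
    fun i => Finset.univ.image (l i) ∪ Finset.univ.image (r i) with hA
  have hAcard : ∀ i, (A i).card ≤ 2*n := by
    intro i
    calc (A i).card ≤ (Finset.univ.image (l i)).card + (Finset.univ.image (r i)).card :=
          Finset.card_union_le _ _
    _ ≤ n + n := by
        apply Nat.add_le_add <;> exact le_trans Finset.card_image_le (by simp)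
    _ = 2*n := (two_mul n).symm
  set rk : Fin k → ℝ → ℕ := fun i x => ((A i).filter (fun a => a ≤ x)).card with hrkdef
  have hrk_lt : ∀ i x, rk i x < 2*n+1 :=
    fun i x => Nat.lt_succ_of_le (le_trans (Finset.card_filter_le _ _) (hAcard i))
  have hrk_mono : ∀ i x y, x ≤ y → rk i x ≤ rk i y := by
    intro i x y hxy
    apply Finset.card_le_card
    intro a ha
    simp only [Finset.mem_filter] at *
    exact ⟨ha.1, le_trans ha.2 hxy⟩
  have hrk_iff : ∀ i x, x ∈ A i → ∀ y, y ∈ A i → (x ≤ y ↔ rk i x ≤ rk i y) := by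
    intro i x hx y hy
    refine ⟨hrk_mono i x y, ?_⟩
    intro hle
    by_contra hxy
    push_neg at hxy
    have hsub : (A i).filter (fun a => a ≤ y) ⊆ (A i).filter (fun a => a ≤ x) := by
      intro a ha; simp only [Finset.mem_filter] at *; exact ⟨ha.1, le_trans ha.2 hxy.le⟩
    have hss : (A i).filter (fun a => a ≤ y) ⊂ (A i).filter (fun a => a ≤ x) := by
      refine (Finset.ssubset_iff_of_subset hsub).mpr ⟨x, ?_, ?_⟩
      · exact Finset.mem_filter.mpr ⟨hx, le_refl x⟩
      · simp only [Finset.mem_filter, not_and, not_le]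
        intro _; exact hxy
    have hlt : rk i y < rk i x := Finset.card_lt_card hss
    exact absurd hle (not_le.mpr hlt)
  set Rk : Fin k → ℝ → Fin (2*n+1) := fun i x => ⟨rk i x, hrk_lt i x⟩ with hRkdef
  have memU : ∀ {v : Fin n} (i : ↥(S v)), (i : Fin k) ∈ U := fun {v} i =>
    Finset.mem_biUnion.mpr ⟨v, Finset.mem_univ v, i.2⟩
  set enc1 : (v : Fin n) → ↥(S v) → Fin (t*n) × Fin (2*n+1) × Fin (2*n+1) :=
    fun v i => (φ ⟨(i : Fin k), memU i⟩, Rk i (l i v), Rk i (r i v)) with henc1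
  set e : Fin n → Fin t → Option (Fin (t*n) × Fin (2*n+1) × Fin (2*n+1)) :=
    fun v j => if h : ∃ i : ↥(S v), ψ v i = j then some (enc1 v h.choose) else none with he
  have he_iff : ∀ v j d, e v j = some d ↔ ∃ i : ↥(S v), ψ v i = j ∧ enc1 v i = d := by
    intro v j d
    constructor
    · intro hej
      simp only [he] at hej
      split_ifs at hej with hex
      · exact ⟨hex.choose, hex.choose_spec, Option.some_inj.mp hej⟩
    · rintro ⟨i, hji, hdi⟩
      have hex : ∃ i : ↥(S v), ψ v i = j := ⟨i, hji⟩
      have hchoose : hex.choose = i := (ψ v).injective (hex.choose_spec.trans hji.symm)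
      simp only [he]
      rw [dif_pos hex, hchoose, hdi]
  refine ⟨e, fun u v huv => ⟨?_, ?_⟩⟩
  · -- forward
    intro hGadj j j' d d' hd hd' h1
    obtain ⟨i, hji, hdi⟩ := (he_iff u j d).mp hd
    obtain ⟨i', hji', hdi'⟩ := (he_iff v j' d').mp hd'
    subst hdi; subst hdi'
    simp only [henc1] at h1 ⊢
    have hii : (i : Fin k) = (i' : Fin k) := by
      have h2 : (⟨(i:Fin k), memU i⟩ : ↥U) = ⟨(i':Fin k), memU i'⟩ := φ.injective h1
      exact congrArg Subtype.val h2
    obtain ⟨x, hx1, hx2⟩ := (hlr (i:Fin k) u v huv).mp ((hadj u v huv).mp hGadj (i:Fin k))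
    rw [Set.mem_Icc] at hx1 hx2
    have hmlu : l (i:Fin k) u ∈ A (i:Fin k) :=
      Finset.mem_union_left _ (Finset.mem_image_of_mem _ (Finset.mem_univ u))
    have hmru : r (i:Fin k) u ∈ A (i:Fin k) :=
      Finset.mem_union_right _ (Finset.mem_image_of_mem _ (Finset.mem_univ u))
    have hmlv : l (i:Fin k) v ∈ A (i:Fin k) :=
      Finset.mem_union_left _ (Finset.mem_image_of_mem _ (Finset.mem_univ v))
    have hmrv : r (i:Fin k) v ∈ A (i:Fin k) :=
      Finset.mem_union_right _ (Finset.mem_image_of_mem _ (Finset.mem_univ v))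
    rw [← hii] at *
    refine ⟨?_, ?_, ?_, ?_⟩ <;>
      simp only [hRkdef, Fin.mk_le_mk]
    · exact (hrk_iff _ _ hmlu _ hmru).mp (le_trans hx1.1 hx1.2)
    · exact (hrk_iff _ _ hmlv _ hmrv).mp (le_trans hx2.1 hx2.2)
    · exact (hrk_iff _ _ hmlu _ hmrv).mp (le_trans hx1.1 hx2.2)
    · exact (hrk_iff _ _ hmlv _ hmru).mp (le_trans hx2.1 hx1.2)
  · -- backward
    intro hP
    refine (hadj u v huv).mpr (fun i => ?_)
    by_cases hu : IsUniversal (I i) u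
    · exact hu v (Ne.symm huv)
    by_cases hv : IsUniversal (I i) v
    · exact (hv u huv).symm
    have hiu : i ∈ S u := by simp [hSdef, hu]
    have hiv : i ∈ S v := by simp [hSdef, hv]
    have h1 := (he_iff u (ψ u ⟨i, hiu⟩) (enc1 u ⟨i, hiu⟩)).mpr ⟨⟨i, hiu⟩, rfl, rfl⟩
    have h2 := (he_iff v (ψ v ⟨i, hiv⟩) (enc1 v ⟨i, hiv⟩)).mpr ⟨⟨i, hiv⟩, rfl, rfl⟩
    have hkey := hP _ _ _ _ h1 h2 (by simp only [henc1])
    obtain ⟨k1, k2, k3, k4⟩ := hkey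
    simp only [henc1, hRkdef, Fin.mk_le_mk] at k1 k2 k3 k4
    have hmlu : l i u ∈ A i :=
      Finset.mem_union_left _ (Finset.mem_image_of_mem _ (Finset.mem_univ u))
    have hmru : r i u ∈ A i :=
      Finset.mem_union_right _ (Finset.mem_image_of_mem _ (Finset.mem_univ u))
    have hmlv : l i v ∈ A i :=
      Finset.mem_union_left _ (Finset.mem_image_of_mem _ (Finset.mem_univ v))
    have hmrv : r i v ∈ A i :=
      Finset.mem_union_right _ (Finset.mem_image_of_mem _ (Finset.mem_univ v))
    refine (hlr i u v huv).mpr ⟨max (l i u) (l i v), Set.mem_Icc.mpr ⟨le_max_left _ _, ?_⟩,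
      Set.mem_Icc.mpr ⟨le_max_right _ _, ?_⟩⟩
    · exact max_le ((hrk_iff _ _ hmlu _ hmru).mpr k1) ((hrk_iff _ _ hmlv _ hmru).mpr k4)
    · exact max_le ((hrk_iff _ _ hmlu _ hmrv).mpr k3) ((hrk_iff _ _ hmlv _ hmrv).mpr k2)

lemma count_le10 (n t : ℕ) :
    {G : SimpleGraph (Fin n) | LocalBoxRep G t}.ncard ≤
      (t*n*((2*n+1)*(2*n+1))+1) ^ (t*n) := by
  classical
  have hT : Fintype.card (Fin n → Fin t → Option (Fin (t*n) × Fin (2*n+1) × Fin (2*n+1)))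
      = (t*n*((2*n+1)*(2*n+1))+1) ^ (t*n) := by
    rw [Fintype.card_fun, Fintype.card_fun]
    simp [Fintype.card_option, Fintype.card_prod, Fintype.card_fin, ← pow_mul]
  set F : SimpleGraph (Fin n) → (Fin n → Fin t → Option (Fin (t*n) × Fin (2*n+1) × Fin (2*n+1))) :=
    fun G => if h : LocalBoxRep G t then (encode_exists10 h).choose else (fun _ _ => none)
    with hF
  have hFinj : Set.InjOn F {G | LocalBoxRep G t} := by
    intro G hG G' hG' hFe
    rw [Set.mem_setOf_eq] at hG hG'
    simp only [hF, dif_pos hG, dif_pos hG'] at hFe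
    ext u v
    by_cases huv : u = v
    · subst huv; simp
    · rw [(encode_exists10 hG).choose_spec u v huv,
        (encode_exists10 hG').choose_spec u v huv, hFe]
  have hle := Set.ncard_le_ncard_of_injOn F (fun G _ => Set.mem_univ (F G)) hFinj Set.finite_univ
  rwa [Set.ncard_univ, Nat.card_eq_fintype_card, hT] at hle

def notEdge10 {n : ℕ} (u v : Fin n) : SimpleGraph (Fin n) where
  Adj x y := x ≠ y ∧ ¬(x = u ∧ y = v) ∧ ¬(x = v ∧ y = u)
  symm := by
    refine ⟨?_⟩
    rintro x y ⟨h1, h2, h3⟩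
    exact ⟨h1.symm, fun ⟨a, b⟩ => h3 ⟨b, a⟩, fun ⟨a, b⟩ => h2 ⟨b, a⟩⟩
  loopless := ⟨by rintro x ⟨h, _⟩; exact h rfl⟩

lemma notEdge10_interval {n : ℕ} (u v : Fin n) (huv : u ≠ v) :
    IsIntervalGraph (notEdge10 u v) := by
  classical
  refine ⟨fun x => if x = v then 1 else 0, fun x => if x = u then 0 else 1, ?_⟩
  intro x y hxy
  rw [Set.Icc_inter_Icc, Set.nonempty_Icc]
  show (x ≠ y ∧ ¬(x = u ∧ y = v) ∧ ¬(x = v ∧ y = u)) ↔ _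
  have hvu : v ≠ u := huv.symm
  have hyx : y ≠ x := hxy.symm
  by_cases hxu : x = u <;> by_cases hxv : x = v <;> by_cases hyu : y = u <;>
    by_cases hyv : y = v <;>
    simp_all [max_le_iff, le_min_iff] <;> norm_num

lemma top_interval10 {n : ℕ} : IsIntervalGraph (⊤ : SimpleGraph (Fin n)) := by
  refine ⟨fun _ => 0, fun _ => 0, ?_⟩
  intro u v huv
  simp [huv, Set.Icc_self]

lemma rep_all10 (n : ℕ) (G : SimpleGraph (Fin n)) : LocalBoxRep G (n*n) := by
  classical
  set J : Fin n × Fin n → SimpleGraph (Fin n) :=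
    fun p => if ¬ G.Adj p.1 p.2 ∧ p.1 ≠ p.2 then notEdge10 p.1 p.2 else ⊤ with hJ
  refine ⟨n*n, fun i => J (finProdFinEquiv.symm i), ?_, ?_, ?_⟩
  · intro i
    simp only [hJ]
    split_ifs with h
    · exact notEdge10_interval _ _ h.2
    · exact top_interval10
  · intro u v huv
    constructor
    · intro h i
      simp only [hJ]
      split_ifs with hp
      · refine ⟨huv, ?_, ?_⟩
        · rintro ⟨rfl, rfl⟩; exact hp.1 h
        · rintro ⟨rfl, rfl⟩; exact hp.1 h.symm
      · exact huv
    · intro h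
      by_contra hna
      have := h (finProdFinEquiv (u, v))
      simp only [hJ, Equiv.symm_apply_apply] at this
      rw [if_pos ⟨hna, huv⟩] at this
      exact this.2.1 ⟨rfl, rfl⟩
  · intro w
    calc {i : Fin (n*n) | ¬ IsUniversal (J (finProdFinEquiv.symm i)) w}.ncard
        ≤ (Set.univ : Set (Fin (n*n))).ncard :=
          Set.ncard_le_ncard (Set.subset_univ _) Set.finite_univ
    _ = n*n := by rw [Set.ncard_univ]; simp

lemma rep_mono10 {V : Type} {G : SimpleGraph V} {t t' : ℕ}
    (h : LocalBoxRep G t) (htt : t ≤ t') : LocalBoxRep G t' := by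
  obtain ⟨k, I, h1, h2, h3⟩ := h
  exact ⟨k, I, h1, h2, fun v => (h3 v).trans htt⟩

def Qgraph10 {n : ℕ} (f : (Σ i : Fin n, Fin (i : ℕ)) → Bool) : SimpleGraph (Fin n) where
  Adj x y := (∃ h : (y : ℕ) < (x : ℕ), f ⟨x, ⟨(y : ℕ), h⟩⟩ = true) ∨
    (∃ h : (x : ℕ) < (y : ℕ), f ⟨y, ⟨(x : ℕ), h⟩⟩ = true)
  symm := ⟨fun x y h => h.symm⟩
  loopless := ⟨by rintro x (⟨h, _⟩ | ⟨h, _⟩) <;> exact lt_irrefl _ h⟩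

lemma Qgraph10_injective {n : ℕ} : Function.Injective (@Qgraph10 n) := by
  intro f f' hff
  funext p
  obtain ⟨i, j⟩ := p
  have hjn : (j : ℕ) < n := lt_trans j.2 i.2
  set y : Fin n := ⟨(j : ℕ), hjn⟩ with hy
  have hadj : ∀ g : (Σ i : Fin n, Fin (i : ℕ)) → Bool,
      (Qgraph10 g).Adj i y ↔ g ⟨i, j⟩ = true := by
    intro g
    constructor
    · rintro (⟨h, hg⟩ | ⟨h, _⟩)
      · exact hg
      · exact absurd h (by have := j.2; simp only [hy]; omega)
    · intro hg
      exact Or.inl ⟨j.2, hg⟩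
  rw [Bool.eq_iff_iff, ← hadj f, ← hadj f', hff]

lemma exists_not_rep10 {n t : ℕ}
    (hlt : (t*n*((2*n+1)*(2*n+1))+1) ^ (t*n) < 2 ^ (∑ i ∈ Finset.range n, i)) :
    ∃ G : SimpleGraph (Fin n), ¬ LocalBoxRep G t := by
  classical
  by_contra hall
  push_neg at hall
  have hsub : Set.range (@Qgraph10 n) ⊆ {G : SimpleGraph (Fin n) | LocalBoxRep G t} :=
    fun G _ => hall G
  have hcard : (Set.range (@Qgraph10 n)).ncard = 2 ^ (∑ i ∈ Finset.range n, i) := by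
    rw [← Nat.card_coe_set_eq, Nat.card_range_of_injective Qgraph10_injective,
      Nat.card_eq_fintype_card, Fintype.card_fun, Fintype.card_bool, Fintype.card_sigma]
    congr 1
    simp only [Fintype.card_fin]
    exact Fin.sum_univ_eq_sum_range (fun i => i) n
  have hfin : ({G : SimpleGraph (Fin n) | LocalBoxRep G t}).Finite := Set.toFinite _
  have := Set.ncard_le_ncard hsub hfin
  rw [hcard] at this
  exact absurd (le_trans this (count_le10 n t)) (not_le.mpr hlt)


/-- ∃ c > 0 such that for every sufficiently large n there is a
graph on n vertices with lbox ≥ c·n/log₂ n. -/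
theorem stmt10 : ∃ c : ℝ, 0 < c ∧ ∃ n₀ : ℕ, ∀ n : ℕ, n₀ ≤ n →
    ∃ (V : Type) (_ : Fintype V) (G : SimpleGraph V),
      Fintype.card V = n ∧
      c * (n : ℝ) / Real.logb 2 (n : ℝ) ≤ (lbox G : ℝ) := by
  classical
  refine ⟨1/32, by norm_num, 3, fun n hn => ?_⟩
  have hn2 : (2 : ℝ) ≤ n := by exact_mod_cast le_trans (by norm_num) hn
  have hn0 : (0 : ℝ) < n := by linarith
  have hL1 : (1 : ℝ) ≤ Real.logb 2 n := by
    rw [show (1:ℝ) = Real.logb 2 2 by simp]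
    exact Real.logb_le_logb_of_le (by norm_num) (by norm_num) hn2
  have hL0 : (0 : ℝ) < Real.logb 2 n := lt_of_lt_of_le one_pos hL1
  set x : ℝ := 1/32 * n / Real.logb 2 n with hx
  have hx0 : 0 ≤ x := by positivity
  set t : ℕ := ⌊x⌋₊ with ht
  have htx : (t : ℝ) ≤ x := Nat.floor_le hx0
  have htn : (t : ℝ) ≤ n := by
    refine le_trans htx ?_
    rw [hx, div_le_iff₀ hL0]
    nlinarith
  have htnn : t ≤ n := by exact_mod_cast htn
  -- the counting inequality
  set M : ℕ := ∑ i ∈ Finset.range n, i with hM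
  have hM2 : M * 2 = n * (n - 1) := Finset.sum_range_id_mul_two n
  have hMR : (n : ℝ) * n / 4 < (M : ℝ) := by
    have h3 : (3 : ℝ) ≤ n := by exact_mod_cast hn
    have hn1 : 1 ≤ n := by omega
    have hcast : (M : ℝ) * 2 = n * ((n:ℝ) - 1) := by
      have h0 : ((M * 2 : ℕ) : ℝ) = ((n * (n-1) : ℕ) : ℝ) := by rw [hM2]
      push_cast [Nat.cast_sub hn1] at h0
      linarith
    nlinarith
  have hbase : t*n*((2*n+1)*(2*n+1))+1 ≤ n^8 := by
    have h2n : 2 ≤ n := by omega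
    have h1 : t*n*((2*n+1)*(2*n+1)) ≤ n*n*((3*n)*(3*n)) := by
      apply Nat.mul_le_mul
      · exact Nat.mul_le_mul_right n htnn
      · apply Nat.mul_le_mul <;> omega
    have h2 : n*n*((3*n)*(3*n)) = 9*n^4 := by ring
    have h4 : 16 ≤ n^4 := by
      calc (16:ℕ) = 2^4 := by norm_num
      _ ≤ n^4 := Nat.pow_le_pow_left h2n 4
    have h5 : n^8 = n^4 * n^4 := by ring
    have h6 : 16 * n^4 ≤ n^4 * n^4 := Nat.mul_le_mul_right _ h4
    have h7 : 1 ≤ n^4 := Nat.one_le_pow 4 n (by omega)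
    omega
  have hpow : (t*n*((2*n+1)*(2*n+1))+1) ^ (t*n) ≤ n ^ (8*(t*n)) := by
    conv_rhs => rw [pow_mul]
    exact Nat.pow_le_pow_left hbase _
  have hstrict : (n : ℝ) ^ (8*(t*n)) < (2 : ℝ) ^ (M : ℕ) := by
    have hexp : (8*(t*n) : ℕ) * Real.logb 2 n < (M : ℝ) := by
      have h1 : ((8*(t*n) : ℕ) : ℝ) = 8 * t * n := by push_cast; ring
      rw [h1]
      have h2 : 8 * (t:ℝ) * n * Real.logb 2 n ≤ 8 * x * n * Real.logb 2 n := by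
        have : (0:ℝ) ≤ 8 * n * Real.logb 2 n := by positivity
        nlinarith
      have h3 : 8 * x * n * Real.logb 2 n = n * n / 4 := by
        rw [hx]; field_simp; ring
      nlinarith
    calc (n : ℝ) ^ (8*(t*n)) = (n : ℝ) ^ ((8*(t*n) : ℕ) : ℝ) := (Real.rpow_natCast _ _).symm
    _ = ((2:ℝ) ^ (Real.logb 2 n)) ^ ((8*(t*n) : ℕ) : ℝ) := by
        rw [Real.rpow_logb (by norm_num) (by norm_num) hn0]
    _ = (2:ℝ) ^ (Real.logb 2 n * ((8*(t*n) : ℕ) : ℝ)) := by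
        rw [← Real.rpow_mul (by norm_num)]
    _ < (2:ℝ) ^ ((M : ℕ) : ℝ) := by
        apply (Real.rpow_lt_rpow_left_iff (by norm_num)).mpr
        rw [mul_comm]; exact hexp
    _ = (2 : ℝ) ^ (M : ℕ) := by rw [Real.rpow_natCast]
  have hltn : (t*n*((2*n+1)*(2*n+1))+1) ^ (t*n) < 2 ^ M := by
    have : (n : ℕ) ^ (8*(t*n)) < 2 ^ M := by exact_mod_cast hstrict
    omega
  obtain ⟨G, hG⟩ := exists_not_rep10 hltn
  refine ⟨Fin n, inferInstance, G, Fintype.card_fin n, ?_⟩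
  have hmem : LocalBoxRep G (n*n) := rep_all10 n G
  have hlbmem : lbox G ∈ {t' : ℕ | LocalBoxRep G t'} := Nat.sInf_mem ⟨n*n, hmem⟩
  have hlb : t + 1 ≤ lbox G := by
    by_contra hc
    push_neg at hc
    exact hG (rep_mono10 hlbmem (by omega))
  have hfinal : x < (lbox G : ℝ) :=
    calc x < (t : ℝ) + 1 := Nat.lt_floor_add_one x
    _ ≤ (lbox G : ℝ) := by exact_mod_cast hlb
  exact hfinal.le
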